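/- Let (i_n) ∈ {-1,0,1}^ℕ satisfy 01(-1)0^∞ ≼ (i_n) ≼ 01^∞ in lexicographic order. Then the function λ ↦ (1-λ)·∑_{n≥1} i_n·λ^{n-1} is strictly increasing on (0, 1/3]. -/

import Mathlib

open scoped Pointwise

/-- `PiFun i λ = (1-λ) ∑_{n≥0} i_n λ^n`, the series Π from the paper (0-based indexing). -/
noncomputable def PiFun (i : ℕ → ℝ) (l : ℝ) : ℝ := (1 - l) * ∑' n : ℕ, i n * l ^ n

/-- `i` is a sequence over the alphabet `{-1,0,1}`. -/
def IsCoding (i : ℕ → ℝ) : Prop := ∀ n, i n = -1 ∨ i n = 0 ∨ i n = 1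

/-- Strict lexicographic order on sequences. -/
def LexLt (i j : ℕ → ℝ) : Prop := ∃ m, (∀ n, n < m → i n = j n) ∧ i m < j m

/-- Non-strict lexicographic order on sequences. -/
def LexLe (i j : ℕ → ℝ) : Prop := LexLt i j ∨ i = j

-- `rho i j = 3^{-k}` where `k` is the first (0-based) index at which the sequences differ
-- (this equals `3^{1-k}` for 1-based indexing as in the paper).
open Classical in
noncomputable def rho (i j : ℕ → ℝ) : ℝ :=
  if i = j then 0 else (3 : ℝ) ^ (-((sInf {n : ℕ | i n ≠ j n} : ℕ) : ℤ))

/-- The middle-`(1-2λ)` Cantor set `C_λ`. -/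
def Cset (l : ℝ) : Set ℝ :=
  {x | ∃ i : ℕ → ℝ, (∀ n, i n = 0 ∨ i n = 1) ∧ x = (1 - l) * ∑' n : ℕ, i n * l ^ n}

/-- `Λ(t) = {λ ∈ (0,1/3] : t ∈ C_λ - C_λ}`. -/
def Lam (t : ℝ) : Set ℝ := {l | l ∈ Set.Ioc (0 : ℝ) (1/3) ∧ t ∈ Cset l - Cset l}

lemma aux_summable {i : ℕ → ℝ} (hi : ∀ n, |i n| ≤ 1) {l : ℝ} (h0 : 0 ≤ l) (h1 : l < 1) :
    Summable fun n => i n * l ^ n := by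
  apply Summable.of_norm_bounded (summable_geometric_of_lt_one h0 h1)
  intro n
  rw [Real.norm_eq_abs, abs_mul, abs_pow, abs_of_nonneg h0]
  exact mul_le_of_le_one_left (pow_nonneg h0 n) (hi n)

lemma aux_sum_shift {l : ℝ} (h0 : 0 ≤ l) (h1 : l < 1) (N : ℕ) :
    Summable fun n : ℕ => (1 - l) * l ^ (n + N) := by
  apply Summable.congr (((summable_geometric_of_lt_one h0 h1)).mul_left ((1 - l) * l ^ N))
  intro n; rw [pow_add]; ring

lemma aux_tail_sum {l : ℝ} (h0 : 0 ≤ l) (h1 : l < 1) (N : ℕ) :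
    ∑' n : ℕ, (1 - l) * l ^ (n + N) = l ^ N := by
  have h2 : (1 : ℝ) - l ≠ 0 := by nlinarith
  calc ∑' n : ℕ, (1 - l) * l ^ (n + N)
      = ∑' n : ℕ, ((1 - l) * l ^ N) * l ^ n := tsum_congr fun n => by rw [pow_add]; ring
    _ = ((1 - l) * l ^ N) * ∑' n : ℕ, l ^ n := tsum_mul_left
    _ = l ^ N := by rw [tsum_geometric_of_lt_one h0 h1]; field_simp

lemma phi_mono {a b : ℝ} (ha : 0 ≤ a) (hab : a ≤ b) (hb : b ≤ 1/2) (n : ℕ) :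
    (1 - a) * a ^ (n + 1) ≤ (1 - b) * b ^ (n + 1) := by
  have h1 : a ^ n ≤ b ^ n := pow_le_pow_left₀ ha hab n
  have h2 : a * (1 - a) ≤ b * (1 - b) := by nlinarith
  calc (1 - a) * a ^ (n + 1) = a ^ n * (a * (1 - a)) := by ring
    _ ≤ b ^ n * (b * (1 - b)) :=
        mul_le_mul h1 h2 (by nlinarith) (pow_nonneg (ha.trans hab) n)
    _ = (1 - b) * b ^ (n + 1) := by ring

lemma summable_t {i : ℕ → ℝ} (hi : ∀ n, |i n| ≤ 1) {a b : ℝ} (h0a : 0 ≤ a) (h1a : a < 1)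
    (h0b : 0 ≤ b) (h1b : b < 1) (N : ℕ) :
    Summable fun n : ℕ => i (n + N) * ((1 - b) * b ^ (n + N) - (1 - a) * a ^ (n + N)) := by
  apply Summable.of_norm_bounded (((aux_sum_shift h0b h1b N).add (aux_sum_shift h0a h1a N)))
  intro n
  rw [Real.norm_eq_abs, abs_mul]
  have hbb : |(1 - b) * b ^ (n + N) - (1 - a) * a ^ (n + N)| ≤
      (1 - b) * b ^ (n + N) + (1 - a) * a ^ (n + N) := by
    have h1 : 0 ≤ (1 - b) * b ^ (n + N) := mul_nonneg (by linarith) (pow_nonneg h0b _)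
    have h2 : 0 ≤ (1 - a) * a ^ (n + N) := mul_nonneg (by linarith) (pow_nonneg h0a _)
    rw [abs_sub_le_iff]; constructor <;> linarith
  calc |i (n + N)| * |(1 - b) * b ^ (n + N) - (1 - a) * a ^ (n + N)|
      ≤ 1 * ((1 - b) * b ^ (n + N) + (1 - a) * a ^ (n + N)) :=
        mul_le_mul (hi _) hbb (abs_nonneg _) zero_le_one
    _ = (1 - b) * b ^ (n + N) + (1 - a) * a ^ (n + N) := one_mul _

/-- tail lower bound: `∑_{n≥N+1} i_n Δ_n ≥ -(b^{N+1} - a^{N+1})` -/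
lemma tail_bound {i : ℕ → ℝ} (hi : ∀ n, -1 ≤ i n) (hi1 : ∀ n, |i n| ≤ 1) {a b : ℝ}
    (ha : 0 ≤ a) (hab : a ≤ b) (hb : b ≤ 1/2) (N : ℕ) :
    -(b ^ (N + 1) - a ^ (N + 1)) ≤
      ∑' n : ℕ, i (n + (N + 1)) * ((1 - b) * b ^ (n + (N + 1)) - (1 - a) * a ^ (n + (N + 1))) := by
  have h1b : b < 1 := lt_of_le_of_lt hb (by norm_num)
  have h1a : a < 1 := lt_of_le_of_lt (hab.trans hb) (by norm_num)
  have hΔ : ∀ n : ℕ, 0 ≤ (1 - b) * b ^ (n + (N + 1)) - (1 - a) * a ^ (n + (N + 1)) := by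
    intro n
    have := phi_mono ha hab hb (n + N)
    have e : n + (N + 1) = n + N + 1 := by omega
    rw [e]; linarith
  have sΔ : Summable fun n : ℕ =>
      (1 - b) * b ^ (n + (N + 1)) - (1 - a) * a ^ (n + (N + 1)) :=
    (aux_sum_shift (by linarith) h1b (N + 1)).sub (aux_sum_shift ha h1a (N + 1))
  have sT := summable_t hi1 ha h1a (by linarith) h1b (N + 1)
  have key : ∑' n : ℕ, -((1 - b) * b ^ (n + (N + 1)) - (1 - a) * a ^ (n + (N + 1))) ≤
      ∑' n : ℕ, i (n + (N + 1)) * ((1 - b) * b ^ (n + (N + 1)) - (1 - a) * a ^ (n + (N + 1))) := by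
    apply Summable.tsum_le_tsum _ sΔ.neg sT
    intro n
    nlinarith [mul_nonneg (by linarith [hi (n + (N + 1))] : (0:ℝ) ≤ i (n + (N + 1)) + 1) (hΔ n)]
  have comp : ∑' n : ℕ, -((1 - b) * b ^ (n + (N + 1)) - (1 - a) * a ^ (n + (N + 1))) =
      -(b ^ (N + 1) - a ^ (N + 1)) := by
    rw [tsum_neg, Summable.tsum_sub (aux_sum_shift (by linarith) h1b (N + 1)) (aux_sum_shift ha h1a (N + 1)),
      aux_tail_sum (by linarith) h1b, aux_tail_sum ha h1a]
  linarith [key, comp.symm.trans_le key]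

lemma cube_mono {a b : ℝ} (ha : 0 ≤ a) (hab : a ≤ b) (hb : b ≤ 1/3) (n : ℕ) :
    a ^ (n + 3) * (1 - 2*a) ≤ b ^ (n + 3) * (1 - 2*b) := by
  have h1 : a ^ (n+1) ≤ b ^ (n+1) := pow_le_pow_left₀ ha hab _
  have h2 : a^2 * (1 - 2*a) ≤ b^2 * (1 - 2*b) := by
    nlinarith [mul_nonneg (mul_nonneg (sub_nonneg.2 hab) ha) (by linarith : (0:ℝ) ≤ 1 - 3*a),
      mul_nonneg (mul_nonneg (sub_nonneg.2 hab) (ha.trans hab)) (by linarith : (0:ℝ) ≤ 1 - 3*b),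
      mul_nonneg (sub_nonneg.2 hab) (sq_nonneg (a - b))]
  calc a ^ (n + 3) * (1 - 2*a) = a ^ (n+1) * (a^2 * (1 - 2*a)) := by ring
    _ ≤ b ^ (n+1) * (b^2 * (1 - 2*b)) :=
        mul_le_mul h1 h2 (by nlinarith [sq_nonneg a]) (pow_nonneg (ha.trans hab) _)
    _ = b ^ (n + 3) * (1 - 2*b) := by ring

lemma main_lt (i : ℕ → ℝ) (hi1 : ∀ n, |i n| ≤ 1) (him : ∀ n, -1 ≤ i n)
    (h0 : i 0 = 0) (h1 : i 1 = 1)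
    (hc : (i 2 = 0 ∨ i 2 = 1) ∨
      (i 2 = -1 ∧ ((∀ n, 3 ≤ n → i n = 0) ∨
        ∃ m, 3 ≤ m ∧ (∀ n, 3 ≤ n → n < m → i n = 0) ∧ i m = 1)))
    {a b : ℝ} (ha : 0 < a) (hab : a < b) (hb : b ≤ 1/3) :
    PiFun i a < PiFun i b := by
  have h1b : b < 1 := by linarith
  have h1a : a < 1 := by linarith
  have ha3 : a < 1/3 := lt_of_lt_of_le hab hb
  have hb2 : b ≤ 1/2 := by linarith
  have hSa := aux_summable hi1 ha.le h1a
  have hSb := aux_summable hi1 (by linarith : (0:ℝ) ≤ b) h1b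
  set t : ℕ → ℝ := fun n => i n * ((1 - b) * b ^ n - (1 - a) * a ^ n) with ht
  have sT : Summable t := by
    apply Summable.congr ((hSb.mul_left (1 - b)).sub (hSa.mul_left (1 - a)))
    intro n; simp only [ht]; ring
  have hD : PiFun i b - PiFun i a = ∑' n, t n := by
    unfold PiFun
    rw [← tsum_mul_left, ← tsum_mul_left,
      ← Summable.tsum_sub (hSb.mul_left _) (hSa.mul_left _)]
    exact tsum_congr fun n => by simp only [ht]; ring
  have hsplit3 : ∑' n, t n = t 0 + t 1 + t 2 + ∑' n, t (n + 3) := by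
    rw [← Summable.sum_add_tsum_nat_add 3 sT]
    simp [Finset.sum_range_succ]
  have ht0 : t 0 = 0 := by simp [ht, h0]
  have ht1 : t 1 = (1 - b) * b - (1 - a) * a := by simp [ht, h1]
  have hbase : 0 < (b - 2*b^2 + b^3) - (a - 2*a^2 + a^3) := by
    have e1 : a*b < 1/9 := by nlinarith
    have e2 : 1/9 < (1-a-b)^2 := by nlinarith [sq_nonneg (1 - a - b - 1/3)]
    have inner : 0 < 1 - 2*a - 2*b + a^2 + a*b + b^2 := by nlinarith
    nlinarith [mul_pos (sub_pos.2 hab) inner]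
  suffices h : 0 < PiFun i b - PiFun i a by linarith
  rw [hD, hsplit3, ht0, ht1]
  rcases hc with hA | ⟨h2, hB⟩
  · have htail : -(b ^ 3 - a ^ 3) ≤ ∑' n, t (n + 3) := by
      have := tail_bound him hi1 ha.le hab.le hb2 2
      simpa [ht] using this
    rcases hA with h2 | h2
    · have ht2' : t 2 = 0 := by simp [ht, h2]
      rw [ht2']
      nlinarith [mul_pos (sub_pos.2 hab)
        (show (0:ℝ) < 1 - a - b - (a^2 + a*b + b^2) by nlinarith)]
    · have ht2' : t 2 = (1 - b) * b ^ 2 - (1 - a) * a ^ 2 := by simp [ht, h2]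
      rw [ht2']
      nlinarith [mul_pos (sub_pos.2 hab)
        (show (0:ℝ) < 1 - 2*(a^2 + a*b + b^2) by nlinarith)]
  · have ht2' : t 2 = -((1 - b) * b ^ 2 - (1 - a) * a ^ 2) := by simp [ht, h2]
    rw [ht2']
    rcases hB with hz | ⟨m, hm3, hmid, hm1⟩
    · have : ∑' n, t (n + 3) = 0 := by
        have : ∀ n : ℕ, t (n + 3) = 0 := fun n => by
          simp [ht, hz (n + 3) (by omega)]
        rw [tsum_congr this, tsum_zero]
      rw [this]; nlinarith
    · set r := m - 3 with hr
      have hm : m = r + 3 := by omega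
      have sT3 : Summable fun n : ℕ => t (n + 3) := by
        have := summable_t hi1 ha.le h1a (by linarith : (0:ℝ) ≤ b) h1b 3
        exact this.congr fun n => by simp [ht]
      have hsplitm : ∑' n, t (n + 3) =
          (∑ j ∈ Finset.range (r + 1), t (j + 3)) + ∑' n, t (n + (r + 1) + 3) := by
        rw [← Summable.sum_add_tsum_nat_add (r + 1) sT3]
      have hfin : ∑ j ∈ Finset.range (r + 1), t (j + 3) =
          (1 - b) * b ^ m - (1 - a) * a ^ m := by
        rw [Finset.sum_eq_single_of_mem r (Finset.self_mem_range_succ r)]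
        · rw [← hm]; simp [ht, hm1]
        · intro x hx hne
          have : i (x + 3) = 0 := hmid (x + 3) (by omega)
            (by have := Finset.mem_range.1 hx; omega)
          simp [ht, this]
      have htail : -(b ^ (m + 1) - a ^ (m + 1)) ≤ ∑' n, t (n + (r + 1) + 3) := by
        have hcong : (fun n : ℕ => t (n + (r + 1) + 3)) = fun n : ℕ => t (n + (m + 1)) := by
          funext n; congr 1; omega
        rw [hcong]
        have := tail_bound him hi1 ha.le hab.le hb2 m
        simpa [ht] using this
      rw [hsplitm, hfin]
      have cube := cube_mono ha.le hab.le hb r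
      rw [← hm] at cube
      have ea : (1 - a) * a ^ m - a ^ (m + 1) = a ^ m * (1 - 2*a) := by rw [pow_succ]; ring
      have eb : (1 - b) * b ^ m - b ^ (m + 1) = b ^ m * (1 - 2*b) := by rw [pow_succ]; ring
      linarith

theorem stmt7 (i : ℕ → ℝ) (hi : IsCoding i)
    (hlow : LexLe (fun n => if n = 0 then (0 : ℝ) else if n = 1 then 1 else if n = 2 then -1 else 0) i)
    (hhigh : LexLe i (fun n => if n = 0 then (0 : ℝ) else 1)) :
    StrictMonoOn (fun l => PiFun i l) (Set.Ioc (0 : ℝ) (1/3)) := by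
  have hi1 : ∀ n, |i n| ≤ 1 := fun n => by rcases hi n with h | h | h <;> simp [h]
  have him : ∀ n, -1 ≤ i n := fun n => by rcases hi n with h | h | h <;> simp [h]
  set L : ℕ → ℝ := fun n => if n = 0 then (0 : ℝ) else if n = 1 then 1 else if n = 2 then -1 else 0 with hL
  set H : ℕ → ℝ := fun n => if n = 0 then (0 : ℝ) else 1 with hH
  have hge : ∀ k, (∀ n, n < k → i n = L n) → L k ≤ i k := by
    intro k hk
    rcases hlow with ⟨j, hjpre, hj⟩ | hEq
    · rcases lt_trichotomy j k with hjk | hjk | hjk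
      · exact absurd ((hk j hjk).symm) (ne_of_lt hj)
      · exact hjk ▸ hj.le
      · exact (hjpre k hjk).le
    · rw [← hEq]
  have hle : ∀ k, (∀ n, n < k → i n = H n) → i k ≤ H k := by
    intro k hk
    rcases hhigh with ⟨j, hjpre, hj⟩ | hEq
    · rcases lt_trichotomy j k with hjk | hjk | hjk
      · exact absurd (hk j hjk) (ne_of_lt hj)
      · exact hjk ▸ hj.le
      · exact (hjpre k hjk).le
    · rw [hEq]
  have h0 : i 0 = 0 := by
    have g1 := hge 0 (by intro n hn; omega)
    have g2 := hle 0 (by intro n hn; omega)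
    simp [hL] at g1; simp [hH] at g2
    linarith
  have h1 : i 1 = 1 := by
    have g1 := hge 1 (by intro n hn; interval_cases n; simp [hL, h0])
    have g2 := hle 1 (by intro n hn; interval_cases n; simp [hH, h0])
    simp [hL] at g1; simp [hH] at g2
    linarith
  have h2le : i 2 ≤ 1 := by
    have g2 := hle 2 (by intro n hn; interval_cases n <;> simp [hH, h0, h1])
    simpa [hH] using g2
  have hc : (i 2 = 0 ∨ i 2 = 1) ∨
      (i 2 = -1 ∧ ((∀ n, 3 ≤ n → i n = 0) ∨
        ∃ m, 3 ≤ m ∧ (∀ n, 3 ≤ n → n < m → i n = 0) ∧ i m = 1)) := by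
    rcases hi 2 with h2 | h2 | h2
    · right
      refine ⟨h2, ?_⟩
      rcases hlow with ⟨j, hjpre, hj⟩ | hEq
      · right
        have hj3 : 3 ≤ j := by
          by_contra hlt
          interval_cases j <;> simp [hL, h0, h1, h2] at hj
        refine ⟨j, hj3, ?_, ?_⟩
        · intro n hn3 hnj
          have := (hjpre n hnj).symm
          simp only [hL] at this
          rw [this, if_neg (by omega : ¬ n = 0), if_neg (by omega : ¬ n = 1),
            if_neg (by omega : ¬ n = 2)]
        · have hLj : L j = 0 := by
            simp only [hL]
            rw [if_neg (by omega : ¬ j = 0), if_neg (by omega : ¬ j = 1),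
              if_neg (by omega : ¬ j = 2)]
          rw [hLj] at hj
          rcases hi j with h | h | h <;> [linarith [hj]; linarith [hj]; exact h]
      · left
        intro n hn3
        rw [← hEq]
        simp only [hL]
        rw [if_neg (by omega : ¬ n = 0), if_neg (by omega : ¬ n = 1),
          if_neg (by omega : ¬ n = 2)]
    · exact Or.inl (Or.inl h2)
    · exact Or.inl (Or.inr h2)
  intro a haI b hbI hab
  exact main_lt i hi1 him h0 h1 hc haI.1 hab hbI.2
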